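/- arXiv:1509.02380 — 4 statements merged into one kernel-verified Lean document; each statement's English description precedes it below -/
import Mathlib

section
/- Fisher–Neyman factorization witnessing that the projection Pτ̂ is a sufficient statistic for the source position x: for every x ∈ ℝ³ and every τ̂ ∈ ℝ^q, the Gaussian density factorizes as exp(−½‖τ̂ − τ*_n(x)‖²_{Σ⁻¹}) / √((2π)^q det Σ) = [exp(−½‖τ̂ − Pτ̂‖²_{Σ⁻¹}) / √((2π)^q det Σ)] · exp(−½‖Pτ̂ − τ*_n(x)‖²_{Σ⁻¹}), where the first factor does not depend on x and the second depends on τ̂ only through Pτ̂. -/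
/-- The index set for the TDOA space: pairs `(j, i)` with `0 ≤ i < j ≤ n`.
The first component of the underlying pair is `j`, the second is `i`. -/
abbrev PairIdx (n : ℕ) : Type := {p : Fin (n + 1) × Fin (n + 1) // p.2 < p.1}

/-- The TDOA `τ_{ji}(x) = ‖x − m_j‖ − ‖x − m_i‖` for the pair `(j,i)`, collected into
the complete TDOA map `τ*_n : ℝ³ → ℝ^q` (propagation speed normalized to 1). -/
noncomputable def tdoaMap (n : ℕ) (m : Fin (n + 1) → EuclideanSpace ℝ (Fin 3))
    (x : EuclideanSpace ℝ (Fin 3)) : PairIdx n → ℝ :=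
  fun p => ‖x - m p.1.1‖ - ‖x - m p.1.2‖

/-- The linear subspace `V_n ⊂ ℝ^q` cut out by the zero-sum conditions
`−τ_{i0} + τ_{j0} − τ_{ji} = 0` for all `0 < i < j ≤ n`. -/
def Vn (n : ℕ) : Submodule ℝ (PairIdx n → ℝ) where
  carrier := {τ | ∀ (i j : Fin (n + 1)) (h0 : (0 : Fin (n + 1)) < i) (hij : i < j),
    -τ ⟨(i, 0), h0⟩ + τ ⟨(j, 0), lt_trans h0 hij⟩ - τ ⟨(j, i), hij⟩ = 0}
  add_mem' := by
    intro a b ha hb i j h0 hij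
    have h1 := ha i j h0 hij
    have h2 := hb i j h0 hij
    simp only [Pi.add_apply]
    linarith
  zero_mem' := by
    intro i j h0 hij
    simp
  smul_mem' := by
    intro c a ha i j h0 hij
    have h1 := ha i j h0 hij
    simp only [Pi.smul_apply, smul_eq_mul]
    linear_combination c * h1

open Matrix

/-- The scalar product `⟨v, w⟩_{Σ⁻¹} = vᵀ Σ⁻¹ w` on `ℝ^q` defined by the Fisher
matrix `Σ⁻¹` of a covariance matrix `Σ`. -/
noncomputable def mInner {ι : Type*} [Fintype ι] [DecidableEq ι]
    (Sg : Matrix ι ι ℝ) (v w : ι → ℝ) : ℝ :=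
  v ⬝ᵥ (Sg⁻¹ *ᵥ w)

/-- Fisher–Neyman factorization witnessing that the projection `Pτ̂` is
a sufficient statistic for the source position `x`: for every `x ∈ ℝ³` and every
`τ̂ ∈ ℝ^q`, the Gaussian density factorizes as
`exp(−½‖τ̂ − τ*_n(x)‖²_{Σ⁻¹}) / √((2π)^q det Σ)
  = [exp(−½‖τ̂ − Pτ̂‖²_{Σ⁻¹}) / √((2π)^q det Σ)] · exp(−½‖Pτ̂ − τ*_n(x)‖²_{Σ⁻¹})`,
where the first factor does not depend on `x` and the second depends on `τ̂` only
through `Pτ̂`. -/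
theorem gaussian_density_fisher_neyman_factorization (n : ℕ) (hn : 2 ≤ n)
    (m : Fin (n + 1) → EuclideanSpace ℝ (Fin 3))
    (Sg : Matrix (PairIdx n) (PairIdx n) ℝ) (hSgSymm : Sg.IsSymm) (hSgPd : Sg.PosDef)
    (P : (PairIdx n → ℝ) →ₗ[ℝ] (PairIdx n → ℝ))
    (hPidem : ∀ v, P (P v) = P v)
    (hPrange : LinearMap.range P = Vn n)
    (hPsa : ∀ v w, mInner Sg (P v) w = mInner Sg v (P w))
    (x : EuclideanSpace ℝ (Fin 3)) (τh : PairIdx n → ℝ) :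
    Real.exp (-(1 / 2) * mInner Sg (τh - tdoaMap n m x) (τh - tdoaMap n m x)) /
        Real.sqrt ((2 * Real.pi) ^ (Fintype.card (PairIdx n)) * Sg.det) =
      (Real.exp (-(1 / 2) * mInner Sg (τh - P τh) (τh - P τh)) /
          Real.sqrt ((2 * Real.pi) ^ (Fintype.card (PairIdx n)) * Sg.det)) *
        Real.exp (-(1 / 2) * mInner Sg (P τh - tdoaMap n m x) (P τh - tdoaMap n m x)) := by
  set t := tdoaMap n m x with ht
  have htV : t ∈ Vn n := by
    intro i j h0 hij
    simp only [ht, tdoaMap]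
    ring
  have htR : t ∈ LinearMap.range P := by rw [hPrange]; exact htV
  have hPt : P t = t := by
    obtain ⟨c, hc⟩ := htR
    rw [← hc, hPidem]
  set a := τh - P τh with ha
  set b := P τh - t with hb
  have hPa : P a = 0 := by
    simp [ha, map_sub, hPidem]
  have hbc : b = P (τh - t) := by rw [map_sub, hPt]
  have hab : mInner Sg a b = 0 := by
    rw [hbc, ← hPsa, hPa]
    simp [mInner]
  have hba : mInner Sg b a = 0 := by
    rw [hbc, hPsa, hPa]
    simp [mInner]
  have expand : ∀ u v : PairIdx n → ℝ, mInner Sg (u + v) (u + v)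
      = mInner Sg u u + mInner Sg u v + mInner Sg v u + mInner Sg v v := by
    intro u v
    simp [mInner, Matrix.mulVec_add, dotProduct_add, add_dotProduct]
    ring
  have hsum : τh - t = a + b := (sub_add_sub_cancel τh (P τh) t).symm
  have key : mInner Sg (τh - t) (τh - t) = mInner Sg a a + mInner Sg b b := by
    rw [hsum, expand, hab, hba]; ring
  rw [key, show -(1/2) * (mInner Sg a a + mInner Sg b b)
      = -(1/2) * mInner Sg a a + -(1/2) * mInner Sg b b by ring,
    Real.exp_add]
  ring
end

section
/- Let Σ be a symmetric positive definite q×q real matrix and P a q×q real matrix satisfying P·P = P and Σ⁻¹·P = Pᵀ·Σ⁻¹. Then Σ ⪰ Σ' where Σ' := P·Σ·Pᵀ; that is, the matrix Σ − P·Σ·Pᵀ is positive semidefinite. -/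
open Matrix

/-- Let `Σ` be a symmetric positive definite `q×q` real matrix and `P`
a `q×q` real matrix satisfying `P·P = P` and `Σ⁻¹·P = Pᵀ·Σ⁻¹`. Then `Σ ⪰ Σ'` where
`Σ' := P·Σ·Pᵀ`; that is, the matrix `Σ − P·Σ·Pᵀ` is positive semidefinite
(`vᵀ (Σ − Σ') v ≥ 0` for all `v`). -/
theorem covariance_dominates_denoised_covariance (q : ℕ)
    (Sg P : Matrix (Fin q) (Fin q) ℝ) (hSgSymm : Sg.IsSymm) (hSgPd : Sg.PosDef)
    (hPidem : P * P = P) (hPsa : Sg⁻¹ * P = Pᵀ * Sg⁻¹) :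
    ∀ v : Fin q → ℝ, 0 ≤ v ⬝ᵥ ((Sg - P * Sg * Pᵀ) *ᵥ v) := by
  have hinv : Invertible Sg := hSgPd.isUnit.invertible
  have hcomm : P * Sg = Sg * Pᵀ := by
    have h := congrArg (fun M => Sg * M * Sg) hPsa
    simp only [Matrix.mul_assoc, Matrix.mul_inv_cancel_left_of_invertible,
      Matrix.inv_mul_of_invertible, Matrix.mul_one] at h
    simpa [Matrix.mul_assoc] using h
  have hPt : Pᵀ * Pᵀ = Pᵀ := by rw [← Matrix.transpose_mul, hPidem]
  have h2 : P * Sg * Pᵀ = P * Sg := by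
    rw [hcomm, Matrix.mul_assoc, hPt]
  have key : Sg - P * Sg * Pᵀ = (1 - P) * Sg * (1 - P)ᵀ := by
    rw [transpose_sub, transpose_one, Matrix.sub_mul, Matrix.sub_mul, Matrix.mul_sub,
      Matrix.mul_sub, Matrix.one_mul, Matrix.mul_one, Matrix.mul_one, h2, ← hcomm]
    abel
  have hpsd : ((1 - P) * Sg * (1 - P)ᵀ).PosSemidef := by
    have := hSgPd.posSemidef.mul_mul_conjTranspose_same (1 - P)
    simpa [conjTranspose_eq_transpose_of_trivial] using this
  intro v
  rw [key]
  simpa using hpsd.dotProduct_mulVec_nonneg v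
end

section
/- Let Σ be a symmetric positive definite q×q real matrix and P a q×q real matrix satisfying P·P = P and Σ⁻¹·P = Pᵀ·Σ⁻¹, and set Σ' := P·Σ·Pᵀ. Then for every real m×q matrix A, the matrix A·Σ·Aᵀ − A·Σ'·Aᵀ is positive semidefinite; i.e., the first-order propagated covariance Σ_x̄ = A Σ Aᵀ of a localization estimator dominates the propagated covariance Σ'_x̄ = A Σ' Aᵀ obtained from denoised measurements. -/
open Matrix

/-- Let `Σ` be a symmetric positive definite `q×q` real matrix and
`P` a `q×q` real matrix satisfying `P·P = P` and `Σ⁻¹·P = Pᵀ·Σ⁻¹`, and set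
`Σ' := P·Σ·Pᵀ`. Then for every real `m×q` matrix `A`, the matrix
`A·Σ·Aᵀ − A·Σ'·Aᵀ` is positive semidefinite; i.e., the first-order propagated
covariance `Σ_x̄ = A Σ Aᵀ` of a localization estimator dominates the propagated
covariance `Σ'_x̄ = A Σ' Aᵀ` obtained from denoised measurements. -/
theorem propagated_covariance_dominates (q m : ℕ)
    (Sg P : Matrix (Fin q) (Fin q) ℝ) (hSgSymm : Sg.IsSymm) (hSgPd : Sg.PosDef)
    (hPidem : P * P = P) (hPsa : Sg⁻¹ * P = Pᵀ * Sg⁻¹)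
    (A : Matrix (Fin m) (Fin q) ℝ) :
    ∀ v : Fin m → ℝ, 0 ≤ v ⬝ᵥ ((A * Sg * Aᵀ - A * (P * Sg * Pᵀ) * Aᵀ) *ᵥ v) := by
  have hdet : IsUnit Sg.det := isUnit_iff_ne_zero.mpr hSgPd.det_pos.ne'
  have hPS : P * Sg = Sg * Pᵀ := by
    have h := congrArg (fun M => Sg * M * Sg) hPsa
    simp only [Matrix.mul_assoc] at h
    rwa [Matrix.mul_nonsing_inv_cancel_left _ _ hdet, Matrix.nonsing_inv_mul _ hdet,
      Matrix.mul_one] at h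
  have hPSP : P * Sg * Pᵀ = P * Sg := by
    rw [Matrix.mul_assoc, ← hPS, ← Matrix.mul_assoc, hPidem]
  have hmid : Sg - P * Sg * Pᵀ = (1 - P) * Sg * (1 - P)ᵀ := by
    simp only [Matrix.transpose_sub, Matrix.transpose_one, Matrix.sub_mul, Matrix.mul_sub,
      Matrix.one_mul, Matrix.mul_one, ← hPS, hPSP]
    abel
  have key : A * Sg * Aᵀ - A * (P * Sg * Pᵀ) * Aᵀ
      = (A * (1 - P)) * Sg * (A * (1 - P))ᵀ := by
    rw [← Matrix.sub_mul, ← Matrix.mul_sub, hmid]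
    simp [Matrix.mul_assoc, Matrix.transpose_mul]
  intro v
  rw [key]
  have hps : ((A * (1 - P)) * Sg * (A * (1 - P))ᵀ).PosSemidef := by
    have := hSgPd.posSemidef.mul_mul_conjTranspose_same (A * (1 - P))
    simpa using this
  simpa using hps.dotProduct_mulVec_nonneg v
end

section
/- If the set S of deleted index pairs contains no pair of the form (j,0) (i.e., all n TDOAs relative to the reference sensor m₀ are retained), then the restriction of p_S to V_n is injective; hence p_S restricts to a linear isomorphism from V_n onto V_S = p_S(V_n), and V_S has dimension n, so the full vector of q denoised TDOAs can be uniquely recovered from its retained coordinates via the zero-sum conditions. -/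
/-- The coordinate-deleting linear map `p_S : ℝ^q → ℝ^{q−s}`, which forgets the
coordinates whose index pair lies in the deleted set `S`. -/
def pS (n : ℕ) (S : Finset (PairIdx n)) :
    (PairIdx n → ℝ) →ₗ[ℝ] ({p : PairIdx n // p ∉ S} → ℝ) :=
  LinearMap.funLeft ℝ ℝ Subtype.val


-- key lemma: an element of `Vn` vanishing on all coordinates `(j,0)` is zero
lemma Vn_eq_zero (n : ℕ) {τ : PairIdx n → ℝ} (hτ : τ ∈ Vn n)
    (h : ∀ (j : Fin (n+1)) (hj : (0:Fin (n+1)) < j), τ ⟨(j,0), hj⟩ = 0) : τ = 0 := by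
  funext p
  obtain ⟨⟨j, i⟩, hij⟩ := p
  by_cases hi : i = 0
  · subst hi; exact h j hij
  · have h0 : (0 : Fin (n+1)) < i := Fin.pos_of_ne_zero hi
    have := hτ i j h0 hij
    have h1 := h i h0
    have h2 := h j (lt_trans h0 hij)
    simp only [Pi.zero_apply]
    linarith

/-- The coordinate map `Vn → ℝ^n` reading off the TDOAs relative to `m₀`. -/
def phi (n : ℕ) : (Vn n) →ₗ[ℝ] (Fin n → ℝ) where
  toFun τ j := (τ : PairIdx n → ℝ) ⟨(j.succ, 0), j.succ_pos⟩
  map_add' _ _ := rfl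
  map_smul' _ _ := rfl

lemma phi_bij (n : ℕ) : Function.Bijective (phi n) := by
  constructor
  · rw [← LinearMap.ker_eq_bot, LinearMap.ker_eq_bot']
    intro τ hτ
    ext1
    refine Vn_eq_zero n τ.2 ?_
    intro j hj
    have := congrFun hτ (j.pred (Fin.pos_iff_ne_zero.mp hj))
    simpa [phi, Fin.succ_pred] using this
  · intro c
    set c' : Fin (n+1) → ℝ := Fin.cons 0 c with hc'
    refine ⟨⟨fun p => c' p.val.1 - c' p.val.2, ?_⟩, ?_⟩
    · intro i j h0 hij; ring
    · ext j
      simp [phi, hc', Fin.cons_succ, Fin.cons_zero]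

lemma finrank_Vn (n : ℕ) : Module.finrank ℝ (Vn n) = n := by
  have := LinearEquiv.finrank_eq (LinearEquiv.ofBijective (phi n) (phi_bij n))
  simpa using this

/-- If the set `S` of deleted index pairs contains no pair of the
form `(j, 0)` (i.e., all `n` TDOAs relative to the reference sensor `m₀` are
retained), then the restriction of `p_S` to `V_n` is injective; hence `p_S` restricts
to a linear isomorphism from `V_n` onto `V_S = p_S(V_n)`, and `V_S` has dimension `n`
(so the full vector of `q` denoised TDOAs can be uniquely recovered from its retained
coordinates via the zero-sum conditions). -/
theorem pS_injective_on_Vn_of_reference_retained (n : ℕ) (hn : 2 ≤ n)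
    (S : Finset (PairIdx n)) (hS : ∀ p ∈ S, (p : PairIdx n).1.2 ≠ 0) :
    Set.InjOn (pS n S) (Vn n : Set (PairIdx n → ℝ)) ∧
      Module.finrank ℝ ((Vn n).map (pS n S)) = n := by
  have key : ∀ τ ∈ Vn n, pS n S τ = 0 → τ = 0 := by
    intro τ hτ h
    refine Vn_eq_zero n hτ ?_
    intro j hj
    have hnot : (⟨(j, 0), hj⟩ : PairIdx n) ∉ S := fun hmem => hS _ hmem rfl
    exact congrFun h ⟨⟨(j, 0), hj⟩, hnot⟩
  have hker : LinearMap.ker ((pS n S).domRestrict (Vn n)) = ⊥ := by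
    rw [LinearMap.ker_eq_bot']
    intro τ hτ
    exact Subtype.ext (key τ τ.2 hτ)
  constructor
  · intro a ha b hb hab
    have hmem : a - b ∈ Vn n := sub_mem ha hb
    have : pS n S (a - b) = 0 := by rw [map_sub, hab, sub_self]
    have := key _ hmem this
    exact sub_eq_zero.mp this
  · have hrange : LinearMap.range ((pS n S).domRestrict (Vn n)) = (Vn n).map (pS n S) := by
      rw [LinearMap.range_domRestrict]
    rw [← hrange]
    have := LinearMap.finrank_range_add_finrank_ker ((pS n S).domRestrict (Vn n))
    rw [hker] at this
    simp at this
    rw [this, finrank_Vn]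
end
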